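/- Let X be a real-valued random variable with mean zero, and let X̄_N denote the average of N independent and identically distributed copies of X. If E[|X|^p] < ∞ for some p > 2, then there exists a constant C_p depending only on p such that E[|X̄_N|^p] ≤ C_p · E[|X|^p] / N^{p/2} for every N ≥ 1. -/

import Mathlib

open MeasureTheory ProbabilityTheory
open scoped ENNReal

lemma tangent_le {x y q : ℝ} (hx : 0 < x) (hy : 0 ≤ y) (hq : 1 ≤ q) :
    x ^ q + q * x ^ (q - 1) * (y - x) ≤ y ^ q := by
  have hs : -1 ≤ (y - x) / x := by
    rw [le_div_iff₀ hx]; linarith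
  have hB := one_add_mul_self_le_rpow_one_add hs hq
  have h1 : (1 : ℝ) + (y - x) / x = y / x := by field_simp; ring
  have h2 : (0 : ℝ) ≤ x ^ q := Real.rpow_nonneg hx.le q
  have h3 : x ^ q * ((1 + (y - x) / x) ^ q) = y ^ q := by
    rw [h1, ← Real.mul_rpow hx.le (div_nonneg hy hx.le)]
    rw [mul_div_cancel₀ _ hx.ne']
  have h4 : x ^ q * (1 + q * ((y - x) / x)) = x ^ q + q * x ^ (q - 1) * (y - x) := by
    rw [Real.rpow_sub_one hx.ne' q]
    field_simp
  calc x ^ q + q * x ^ (q - 1) * (y - x) = x ^ q * (1 + q * ((y - x) / x)) := h4.symm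
    _ ≤ x ^ q * ((1 + (y - x) / x) ^ q) := by
        apply mul_le_mul_of_nonneg_left hB h2
    _ = y ^ q := h3

lemma one_dim {p : ℝ} (hp : 2 < p) (t : ℝ) :
    |1 + t| ^ p ≤ 1 + p * t + ((2:ℝ) ^ p + p + p * (p - 1) * 2 ^ p) * (t ^ 2 + |t| ^ p) := by
  set D : ℝ := (2:ℝ) ^ p + p + p * (p - 1) * 2 ^ p with hD
  have h2p : (1:ℝ) ≤ 2 ^ p := Real.one_le_rpow (by norm_num) (by linarith)
  have hq : (0:ℝ) ≤ p * (p - 1) * 2 ^ p :=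
    mul_nonneg (mul_nonneg (by linarith) (by linarith)) (Real.rpow_nonneg (by norm_num) p)
  have hDp : p ≤ D := by rw [hD]; linarith
  have hD0 : (0:ℝ) ≤ D := by linarith
  have htp : (0:ℝ) ≤ |t| ^ p := Real.rpow_nonneg (abs_nonneg t) p
  have hsq : (0:ℝ) ≤ t ^ 2 := sq_nonneg t
  have hDpq : p * (p - 1) ≤ D := by
    have h1 : (0:ℝ) ≤ p * (p - 1) := by nlinarith
    nlinarith [mul_nonneg h1 (by linarith : (0:ℝ) ≤ 2 ^ p - 1)]
  rcases le_or_gt |t| 1 with hle | hgt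
  · -- |t| ≤ 1
    rcases le_or_gt 0 t with ht0 | ht0
    · -- 0 ≤ t ≤ 1
      have h1t : (0:ℝ) < 1 + t := by linarith
      have habs : |1 + t| = 1 + t := abs_of_pos h1t
      have hA := tangent_le (x := 1 + t) (y := 1) h1t zero_le_one (by linarith : (1:ℝ) ≤ p)
      have hB := tangent_le (x := 1 + t) (y := 1) h1t zero_le_one (by linarith : (1:ℝ) ≤ p - 1)
      simp only [Real.one_rpow] at hA hB
      have e1 : p - 1 - 1 = p - 2 := by ring
      rw [e1] at hB
      have hbound : (1 + t) ^ (p - 2) ≤ 2 ^ p := by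
        calc (1 + t) ^ (p - 2) ≤ 2 ^ (p - 2) := by
              apply Real.rpow_le_rpow h1t.le (by rw [abs_le] at hle; linarith) (by linarith)
          _ ≤ 2 ^ p := Real.rpow_le_rpow_of_exponent_le (by norm_num) (by linarith)
      have e2 : p * t * ((1 + t) ^ (p - 1)) ≤ p * t * (1 + (p - 1) * (1 + t) ^ (p - 2) * t) := by
        apply mul_le_mul_of_nonneg_left _ (by positivity)
        linarith
      have e3 : p * (p - 1) * t ^ 2 * (1 + t) ^ (p - 2) ≤ p * (p - 1) * t ^ 2 * 2 ^ p := by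
        apply mul_le_mul_of_nonneg_left hbound
        have : (0:ℝ) ≤ p * (p-1) := mul_nonneg (by linarith) (by linarith)
        nlinarith
      have key : (1 + t) ^ p ≤ 1 + p * t + p * (p - 1) * 2 ^ p * t ^ 2 := by nlinarith
      rw [habs]
      nlinarith [mul_nonneg hD0 htp]
    · -- -1 ≤ t < 0
      have habs : |1 + t| = 1 + t := by
        rw [abs_le] at hle; exact abs_of_nonneg (by linarith)
      rcases eq_or_lt_of_le (by rw [abs_le] at hle; linarith : (-1:ℝ) ≤ t) with heq | hlt
      · rw [habs, ← heq]
        norm_num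
        rw [Real.zero_rpow (by linarith : p ≠ 0)]
        linarith
      · have h1t : (0:ℝ) < 1 + t := by linarith
        have hA := tangent_le (x := 1 + t) (y := 1) h1t zero_le_one (by linarith : (1:ℝ) ≤ p)
        simp only [Real.one_rpow] at hA
        have hBer := one_add_mul_self_le_rpow_one_add (by linarith : (-1:ℝ) ≤ t)
          (by linarith : (1:ℝ) ≤ p - 1)
        have e2 : p * t * ((1 + t) ^ (p - 1)) ≤ p * t * (1 + (p - 1) * t) := by
          apply mul_le_mul_of_nonpos_left hBer
          nlinarith
        have key : (1 + t) ^ p ≤ 1 + p * t + p * (p - 1) * t ^ 2 := by nlinarith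
        rw [habs]
        nlinarith [mul_le_mul_of_nonneg_right hDpq hsq, mul_nonneg hD0 htp]
  · -- |t| > 1
    have h1 : |1 + t| ^ p ≤ 2 ^ p * |t| ^ p := by
      calc |1 + t| ^ p ≤ (2 * |t|) ^ p := by
            apply Real.rpow_le_rpow (abs_nonneg _) _ (by linarith)
            calc |1 + t| ≤ |(1:ℝ)| + |t| := abs_add_le 1 t
              _ = 1 + |t| := by rw [abs_one]
              _ ≤ 2 * |t| := by linarith
        _ = 2 ^ p * |t| ^ p := Real.mul_rpow (by norm_num) (abs_nonneg t)
    have h2 : |t| ≤ |t| ^ p := by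
      calc |t| = |t| ^ (1:ℝ) := (Real.rpow_one _).symm
        _ ≤ |t| ^ p := Real.rpow_le_rpow_of_exponent_le hgt.le (by linarith)
    have h3 : -(p * |t| ^ p) ≤ p * t := by
      have : -t ≤ |t| := neg_le_abs t
      nlinarith
    nlinarith [mul_nonneg hq htp, mul_nonneg hD0 hsq]

lemma two_var_pos {p : ℝ} (hp : 2 < p) {a : ℝ} (ha : 0 < a) (b : ℝ) :
    |a + b| ^ p ≤ |a| ^ p + p * (|a| ^ (p - 2) * a) * b
      + ((2:ℝ) ^ p + p + p * (p - 1) * 2 ^ p) * (|a| ^ (p - 2) * b ^ 2 + |b| ^ p) := by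
  set D : ℝ := (2:ℝ) ^ p + p + p * (p - 1) * 2 ^ p with hD
  have habs : |a| = a := abs_of_pos ha
  rw [habs]
  have hap : (0:ℝ) < a ^ p := Real.rpow_pos_of_pos ha p
  have e : a ^ (p - 2) = a ^ p / a ^ 2 := by
    rw [Real.rpow_sub ha]
    norm_num
  have hca : a * (1 + b / a) = a + b := by field_simp
  have hcb : a * (b / a) = b := by field_simp
  have i1 : |a + b| ^ p = a ^ p * |1 + b / a| ^ p := by
    calc |a + b| ^ p = |a * (1 + b / a)| ^ p := by rw [hca]
      _ = (|a| * |1 + b / a|) ^ p := by rw [abs_mul]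
      _ = |a| ^ p * |1 + b / a| ^ p := Real.mul_rpow (abs_nonneg _) (abs_nonneg _)
      _ = a ^ p * |1 + b / a| ^ p := by rw [habs]
  have i4 : a ^ p * |b / a| ^ p = |b| ^ p := by
    calc a ^ p * |b / a| ^ p = |a| ^ p * |b / a| ^ p := by rw [habs]
      _ = (|a| * |b / a|) ^ p := (Real.mul_rpow (abs_nonneg _) (abs_nonneg _)).symm
      _ = |a * (b / a)| ^ p := by rw [abs_mul]
      _ = |b| ^ p := by rw [hcb]
  have i2 : a ^ p * (p * (b / a)) = p * (a ^ (p - 2) * a) * b := by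
    rw [e]; field_simp
  have i3 : a ^ p * (b / a) ^ 2 = a ^ (p - 2) * b ^ 2 := by
    rw [e]; field_simp
  have h := one_dim hp (b / a)
  calc |a + b| ^ p = a ^ p * |1 + b / a| ^ p := i1
    _ ≤ a ^ p * (1 + p * (b / a) + D * ((b / a) ^ 2 + |b / a| ^ p)) :=
        mul_le_mul_of_nonneg_left h hap.le
    _ = a ^ p + p * (a ^ (p - 2) * a) * b + D * (a ^ (p - 2) * b ^ 2 + |b| ^ p) := by
        linear_combination i2 + D * i3 + D * i4

lemma two_var {p : ℝ} (hp : 2 < p) (a b : ℝ) :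
    |a + b| ^ p ≤ |a| ^ p + p * (|a| ^ (p - 2) * a) * b
      + ((2:ℝ) ^ p + p + p * (p - 1) * 2 ^ p) * (|a| ^ (p - 2) * b ^ 2 + |b| ^ p) := by
  set D : ℝ := (2:ℝ) ^ p + p + p * (p - 1) * 2 ^ p with hD
  have h2p : (1:ℝ) ≤ 2 ^ p := Real.one_le_rpow (by norm_num) (by linarith)
  have hq : (0:ℝ) ≤ p * (p - 1) * 2 ^ p :=
    mul_nonneg (mul_nonneg (by linarith) (by linarith)) (Real.rpow_nonneg (by norm_num) p)
  rcases lt_trichotomy a 0 with hneg | hzero | hpos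
  · have h := two_var_pos hp (a := -a) (by linarith) (-b)
    simp only [← neg_add, abs_neg, neg_neg, neg_sq, mul_neg, neg_mul] at h
    convert h using 3
  · subst hzero
    simp only [abs_zero, zero_add, mul_zero, zero_mul]
    rw [Real.zero_rpow (by linarith : p ≠ 0), Real.zero_rpow (by linarith : p - 2 ≠ 0)]
    have htp : (0:ℝ) ≤ |b| ^ p := Real.rpow_nonneg (abs_nonneg b) p
    nlinarith
  · exact two_var_pos hp hpos b

lemma integrable_abs_rpow {Ω : Type} [MeasurableSpace Ω] {μ : Measure Ω} [IsFiniteMeasure μ]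
    {f : Ω → ℝ} {p r : ℝ} (hf : MemLp f (ENNReal.ofReal p) μ) (hr0 : 0 < r) (hrp : r ≤ p) :
    Integrable (fun ω => |f ω| ^ r) μ := by
  have h1 : MemLp f (ENNReal.ofReal r) μ :=
    hf.mono_exponent (ENNReal.ofReal_le_ofReal hrp)
  have h2 := h1.integrable_norm_rpow (ENNReal.ofReal_pos.mpr hr0).ne' ENNReal.ofReal_ne_top
  simpa [ENNReal.toReal_ofReal hr0.le, Real.norm_eq_abs] using h2

lemma lyap {Ω : Type} [MeasurableSpace Ω] (μ : Measure Ω) [IsProbabilityMeasure μ]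
    {f : Ω → ℝ} {r q : ℝ} (hr : 0 < r) (hrq : r < q)
    (hf : MemLp f (ENNReal.ofReal q) μ) :
    ∫ ω, |f ω| ^ r ∂μ ≤ (∫ ω, |f ω| ^ q ∂μ) ^ (r / q) := by
  have hq0 : (0:ℝ) < q := hr.trans hrq
  set P : ℝ := q / r with hP
  set Q : ℝ := q / (q - r) with hQ
  have hPQ : P.HolderConjugate Q := by
    rw [Real.holderConjugate_iff]
    constructor
    · rw [hP]; rw [lt_div_iff₀ hr]; linarith
    · rw [hP, hQ]; field_simp; ring
  have hf' : MemLp (fun ω => |f ω| ^ r) (ENNReal.ofReal P) μ := by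
    have h := hf.norm_rpow_div (ENNReal.ofReal r)
    have h1 : (ENNReal.ofReal r).toReal = r := ENNReal.toReal_ofReal hr.le
    have h2 : ENNReal.ofReal q / ENNReal.ofReal r = ENNReal.ofReal P := by
      rw [hP, ENNReal.ofReal_div_of_pos hr]
    rw [h1, h2] at h
    simpa only [Real.norm_eq_abs] using h
  have hnn : 0 ≤ᵐ[μ] fun ω => |f ω| ^ r :=
    Filter.Eventually.of_forall fun ω => Real.rpow_nonneg (abs_nonneg _) r
  have h := integral_mul_le_Lp_mul_Lq_of_nonneg hPQ hnn
    (Filter.Eventually.of_forall fun (_ : Ω) => (zero_le_one : (0:ℝ) ≤ 1))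
    hf' (memLp_const 1)
  simp only [mul_one, Real.one_rpow] at h
  rw [integral_const] at h
  simp only [measure_univ, probReal_univ, ENNReal.toReal_one, smul_eq_mul, one_mul, Real.one_rpow,
    mul_one] at h
  have hrP : ∀ x : ℝ, (|x| ^ r) ^ P = |x| ^ q := by
    intro x
    rw [← Real.rpow_mul (abs_nonneg x)]
    congr 1
    rw [hP]; field_simp
  simp_rw [hrP] at h
  have h1P : 1 / P = r / q := by rw [hP]; field_simp
  rwa [h1P] at h

lemma numeric {p D K : ℝ} (hp : 2 < p) (hD : 1 ≤ D)
    (hK : K = D + (4 * D / p) ^ (p / 2) + 4 * D / p) {x : ℝ} (hx : x = 0 ∨ 1 ≤ x) :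
    K * x ^ (p / 2) + D * K ^ ((p - 2) / p) * x ^ ((p - 2) / 2) + D ≤ K * (x + 1) ^ (p / 2) := by
  have hp0 : (0:ℝ) < p := by linarith
  have h4D : (0:ℝ) < 4 * D / p := by positivity
  have h4Dr : (0:ℝ) ≤ (4 * D / p) ^ (p / 2) := Real.rpow_nonneg h4D.le _
  have hKD : D ≤ K := by rw [hK]; linarith
  have hK0 : (0:ℝ) < K := by linarith
  have hKa : 4 * D / p ≤ K := by rw [hK]; linarith
  have hKb : (4 * D / p) ^ (p / 2) ≤ K := by rw [hK]; linarith
  have hK2p : 4 * D / p ≤ K ^ (2 / p) := by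
    have h := Real.rpow_le_rpow h4Dr hKb (by positivity : (0:ℝ) ≤ 2 / p)
    rwa [← Real.rpow_mul h4D.le, show p / 2 * (2 / p) = 1 by field_simp, Real.rpow_one] at h
  have hK2p0 : (0:ℝ) < K ^ (2 / p) := lt_of_lt_of_le h4D hK2p
  have hstep1 : D * K ^ ((p - 2) / p) ≤ p / 4 * K := by
    have e1 : K ^ ((p - 2) / p) = K / K ^ (2 / p) := by
      rw [show (p - 2) / p = 1 - 2 / p by field_simp, Real.rpow_sub hK0, Real.rpow_one]
    rw [e1]
    have h2 : K / K ^ (2 / p) ≤ K / (4 * D / p) :=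
      div_le_div_of_nonneg_left hK0.le h4D hK2p
    calc D * (K / K ^ (2 / p)) ≤ D * (K / (4 * D / p)) :=
          mul_le_mul_of_nonneg_left h2 (by linarith)
      _ = p / 4 * K := by field_simp
  have hstep2 : D ≤ p / 4 * K := by
    have := mul_le_mul_of_nonneg_left hKa (le_of_lt (by positivity : (0:ℝ) < p / 4))
    calc D = p / 4 * (4 * D / p) := by field_simp
      _ ≤ p / 4 * K := this
  rcases hx with rfl | hx1
  · rw [Real.zero_rpow (by positivity : p / 2 ≠ 0),
      Real.zero_rpow (by rw [div_ne_zero_iff]; constructor <;> [linarith; norm_num] : (p - 2) / 2 ≠ 0),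
      zero_add, Real.one_rpow]
    simp only [mul_zero, zero_add]
    linarith
  · have hx0 : (0:ℝ) < x := by linarith
    have htan := tangent_le (x := x) (y := x + 1) hx0 (by linarith) (by linarith : (1:ℝ) ≤ p / 2)
    rw [show x + 1 - x = 1 by ring, show p / 2 - 1 = (p - 2) / 2 by ring, mul_one] at htan
    have hxe : (1:ℝ) ≤ x ^ ((p - 2) / 2) := Real.one_le_rpow hx1 (by linarith)
    have hxe0 : (0:ℝ) ≤ x ^ ((p - 2) / 2) := by linarith
    have hmul := mul_le_mul_of_nonneg_left htan hK0.le
    have h1 : D * K ^ ((p - 2) / p) * x ^ ((p - 2) / 2) ≤ p / 4 * K * x ^ ((p - 2) / 2) :=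
      mul_le_mul_of_nonneg_right hstep1 hxe0
    have h2 : D ≤ p / 4 * K * x ^ ((p - 2) / 2) := by
      calc D ≤ p / 4 * K := hstep2
        _ = p / 4 * K * 1 := by ring
        _ ≤ p / 4 * K * x ^ ((p - 2) / 2) :=
            mul_le_mul_of_nonneg_left hxe (by positivity)
    nlinarith

lemma step_ineq {Ω : Type} [MeasurableSpace Ω] (μ : Measure Ω) [IsProbabilityMeasure μ]
    {p D : ℝ} (hp : 2 < p) (hD : D = (2:ℝ) ^ p + p + p * (p - 1) * 2 ^ p)
    {S Y : Ω → ℝ} (hSm : Measurable S) (hYm : Measurable Y)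
    (memS : MemLp S (ENNReal.ofReal p) μ) (memY : MemLp Y (ENNReal.ofReal p) μ)
    (hind : IndepFun S Y μ) (hEY : ∫ ω, Y ω ∂μ = 0) :
    ∫ ω, |S ω + Y ω| ^ p ∂μ ≤ ∫ ω, |S ω| ^ p ∂μ
      + D * ((∫ ω, |S ω| ^ (p - 2) ∂μ) * (∫ ω, (Y ω) ^ 2 ∂μ) + ∫ ω, |Y ω| ^ p ∂μ) := by
  have hp0 : (0:ℝ) < p := by linarith
  have hep1 : (1:ℝ≥0∞) ≤ ENNReal.ofReal p := by
    rw [show (1:ℝ≥0∞) = ENNReal.ofReal 1 from by norm_num]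
    exact ENNReal.ofReal_le_ofReal (by linarith)
  -- integrabilities
  have intS_p : Integrable (fun ω => |S ω| ^ p) μ := integrable_abs_rpow memS hp0 le_rfl
  have intS_p2 : Integrable (fun ω => |S ω| ^ (p - 2)) μ :=
    integrable_abs_rpow memS (by linarith) (by linarith)
  have intS_p1 : Integrable (fun ω => |S ω| ^ (p - 1)) μ :=
    integrable_abs_rpow memS (by linarith) (by linarith)
  have intY : Integrable Y μ := memY.integrable hep1
  have intY_p : Integrable (fun ω => |Y ω| ^ p) μ := integrable_abs_rpow memY hp0 le_rfl
  have memY2 : MemLp Y 2 μ := by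
    refine memY.mono_exponent ?_
    rw [show (2:ℝ≥0∞) = ENNReal.ofReal 2 from by norm_num]
    exact ENNReal.ofReal_le_ofReal (by linarith)
  have intY2 : Integrable (fun ω => (Y ω) ^ 2) μ := memY2.integrable_sq
  have hrabs : ∀ x : ℝ, |x| ^ (p - 2) * |x| = |x| ^ (p - 1) := by
    intro x
    rw [show p - 1 = (p - 2) + 1 from by ring,
      Real.rpow_add' (abs_nonneg x) (by linarith : (p - 2) + 1 ≠ 0), Real.rpow_one]
  have intg1 : Integrable (fun ω => |S ω| ^ (p - 2) * S ω) μ := by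
    refine intS_p1.mono' ?_ ?_
    · exact (by fun_prop : Measurable fun ω => |S ω| ^ (p - 2) * S ω).aestronglyMeasurable
    · refine Filter.Eventually.of_forall fun ω => ?_
      rw [Real.norm_eq_abs, abs_mul, abs_of_nonneg (Real.rpow_nonneg (abs_nonneg _) _),
        hrabs (S ω)]
  -- independence of compositions
  have hind1 : IndepFun (fun ω => |S ω| ^ (p - 2) * S ω) Y μ := by
    have h := hind.comp (φ := fun x : ℝ => |x| ^ (p - 2) * x) (ψ := id) (by fun_prop)
      measurable_id
    simpa [Function.comp_def] using h
  have hind2 : IndepFun (fun ω => |S ω| ^ (p - 2)) (fun ω => (Y ω) ^ 2) μ := by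
    have h := hind.comp (φ := fun x : ℝ => |x| ^ (p - 2)) (ψ := fun x : ℝ => x ^ 2)
      (by fun_prop) (by fun_prop)
    simpa [Function.comp_def] using h
  have intc1 : Integrable (fun ω => |S ω| ^ (p - 2) * S ω * Y ω) μ :=
    hind1.integrable_mul intg1 intY
  have intc2 : Integrable (fun ω => |S ω| ^ (p - 2) * (Y ω) ^ 2) μ :=
    hind2.integrable_mul intS_p2 intY2
  have Ec1 : ∫ ω, |S ω| ^ (p - 2) * S ω * Y ω ∂μ = 0 := by
    rw [hind1.integral_fun_mul_eq_mul_integral intg1.aestronglyMeasurable intY.aestronglyMeasurable, hEY,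
      mul_zero]
  have Ec2 : ∫ ω, |S ω| ^ (p - 2) * (Y ω) ^ 2 ∂μ
      = (∫ ω, |S ω| ^ (p - 2) ∂μ) * ∫ ω, (Y ω) ^ 2 ∂μ :=
    hind2.integral_fun_mul_eq_mul_integral intS_p2.aestronglyMeasurable intY2.aestronglyMeasurable
  -- pointwise bound and integration
  have intc1' : Integrable (fun ω => p * (|S ω| ^ (p - 2) * S ω * Y ω)) μ := intc1.const_mul p
  have intc2' : Integrable (fun ω => D * (|S ω| ^ (p - 2) * (Y ω) ^ 2 + |Y ω| ^ p)) μ :=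
    (intc2.add intY_p).const_mul D
  have intAB : Integrable (fun ω => |S ω| ^ p + p * (|S ω| ^ (p - 2) * S ω * Y ω)) μ :=
    intS_p.add intc1'
  have hmono : ∫ ω, |S ω + Y ω| ^ p ∂μ ≤ ∫ ω, (|S ω| ^ p
      + p * (|S ω| ^ (p - 2) * S ω * Y ω)
      + D * (|S ω| ^ (p - 2) * (Y ω) ^ 2 + |Y ω| ^ p)) ∂μ := by
    refine integral_mono ?_ (intAB.add intc2') ?_
    · have memSY : MemLp (fun ω => S ω + Y ω) (ENNReal.ofReal p) μ := memS.add memY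
      exact integrable_abs_rpow memSY hp0 le_rfl
    · intro ω
      have h := two_var hp (S ω) (Y ω)
      rw [hD]
      dsimp only
      nlinarith [h]
  rw [integral_add intAB intc2', integral_add intS_p intc1',
    integral_const_mul, integral_const_mul, integral_add intc2 intY_p, Ec1, Ec2] at hmono
  simpa using hmono

lemma main_bound {p : ℝ} (hp : 2 < p) {D K : ℝ}
    (hD : D = (2:ℝ) ^ p + p + p * (p - 1) * 2 ^ p)
    (hK : K = D + (4 * D / p) ^ (p / 2) + 4 * D / p)
    {Ω : Type} [MeasurableSpace Ω] (μ : Measure Ω) [IsProbabilityMeasure μ]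
    (X : ℕ → Ω → ℝ) (hXm : ∀ i, Measurable (X i))
    (hindep : iIndepFun X μ)
    (hid : ∀ i, IdentDistrib (X i) (X 0) μ μ)
    (hmean : ∫ ω, X 0 ω ∂μ = 0)
    (hint : Integrable (fun ω => |X 0 ω| ^ p) μ) (n : ℕ) :
    ∫ ω, |∑ i ∈ Finset.range n, X i ω| ^ p ∂μ
      ≤ K * (n:ℝ) ^ (p / 2) * ∫ ω, |X 0 ω| ^ p ∂μ := by
  have hp0 : (0:ℝ) < p := by linarith
  have h2p : (1:ℝ) ≤ 2 ^ p := Real.one_le_rpow (by norm_num) (by linarith)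
  have hq : (0:ℝ) ≤ p * (p - 1) * 2 ^ p :=
    mul_nonneg (mul_nonneg (by linarith) (by linarith)) (Real.rpow_nonneg (by norm_num) p)
  have hD1 : (1:ℝ) ≤ D := by rw [hD]; linarith
  have hD0 : (0:ℝ) ≤ D := by linarith
  have hK0 : (0:ℝ) ≤ K := by
    rw [hK]
    have : (0:ℝ) ≤ (4 * D / p) ^ (p / 2) := Real.rpow_nonneg (by positivity) _
    have : (0:ℝ) ≤ 4 * D / p := by positivity
    linarith
  -- ℒp facts
  have hep0 : ENNReal.ofReal p ≠ 0 := (ENNReal.ofReal_pos.mpr hp0).ne'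
  have hepT : ENNReal.ofReal p ≠ ⊤ := ENNReal.ofReal_ne_top
  have heptr : (ENNReal.ofReal p).toReal = p := ENNReal.toReal_ofReal hp0.le
  have hX0mem : MemLp (X 0) (ENNReal.ofReal p) μ := by
    refine (memLp_norm_rpow_iff (hXm 0).aestronglyMeasurable hep0 hepT).mp ?_
    rw [ENNReal.div_self hep0 hepT, memLp_one_iff_integrable]
    simpa [heptr, Real.norm_eq_abs] using hint
  have hXmem : ∀ i, MemLp (X i) (ENNReal.ofReal p) μ := fun i =>
    ((hid i).memLp_iff).mpr hX0mem
  set m : ℝ := ∫ ω, |X 0 ω| ^ p ∂μ with hm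
  have hm0 : 0 ≤ m :=
    integral_nonneg fun ω => Real.rpow_nonneg (abs_nonneg _) p
  have hMi : ∀ i, ∫ ω, |X i ω| ^ p ∂μ = m := by
    intro i
    have h := ((hid i).comp (by fun_prop : Measurable fun x : ℝ => |x| ^ p)).integral_eq
    simpa [Function.comp] using h
  have hE : ∀ i, ∫ ω, X i ω ∂μ = 0 := fun i => (hid i).integral_eq.trans hmean
  have habs2 : ∀ x : ℝ, |x| ^ (2:ℝ) = x ^ 2 := fun x => by
    rw [show (2:ℝ) = ((2:ℕ):ℝ) from by norm_num, Real.rpow_natCast, sq_abs]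
  have hX2 : ∀ i, ∫ ω, (X i ω) ^ 2 ∂μ ≤ m ^ (2 / p) := by
    intro i
    have h0 := lyap μ (f := X 0) (r := 2) (q := p) two_pos hp hX0mem
    simp_rw [habs2] at h0
    have ht : ∫ ω, (X i ω) ^ 2 ∂μ = ∫ ω, (X 0 ω) ^ 2 ∂μ := by
      have h := ((hid i).comp (by fun_prop : Measurable fun x : ℝ => x ^ 2)).integral_eq
      simpa [Function.comp] using h
    rw [ht]; exact h0
  -- induction
  induction n with
  | zero =>
    simp [Real.zero_rpow hp0.ne', Real.zero_rpow (show p / 2 ≠ 0 by positivity)]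
  | succ n ih =>
    have hSmem : MemLp (fun ω => ∑ i ∈ Finset.range n, X i ω) (ENNReal.ofReal p) μ :=
      memLp_finset_sum _ fun i _ => hXmem i
    have hindS : IndepFun (fun ω => ∑ i ∈ Finset.range n, X i ω) (X n) μ := by
      have h := hindep.indepFun_finset_sum_of_notMem hXm
        (Finset.notMem_range_self (n := n))
      rwa [show (∑ j ∈ Finset.range n, X j) = (fun ω => ∑ j ∈ Finset.range n, X j ω) from
        funext fun ω => Finset.sum_apply ω (Finset.range n) X] at h
    have key := step_ineq μ hp hD (S := fun ω => ∑ i ∈ Finset.range n, X i ω) (Y := X n)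
      (Finset.measurable_sum _ fun i _ => hXm i) (hXm n) hSmem (hXmem n) hindS (hE n)
    -- abbreviations
    set A : ℝ := ∫ ω, |∑ i ∈ Finset.range n, X i ω| ^ p ∂μ with hA
    set B : ℝ := ∫ ω, |∑ i ∈ Finset.range n, X i ω| ^ (p - 2) ∂μ with hB
    set Cc : ℝ := ∫ ω, (X n ω) ^ 2 ∂μ with hC
    have hA0 : 0 ≤ A := integral_nonneg fun ω => Real.rpow_nonneg (abs_nonneg _) p
    have hB0 : 0 ≤ B := integral_nonneg fun ω => Real.rpow_nonneg (abs_nonneg _) _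
    have hC0 : 0 ≤ Cc := integral_nonneg fun ω => sq_nonneg _
    have hBle : B ≤ A ^ ((p - 2) / p) :=
      lyap μ (by linarith) (by linarith) hSmem
    have hCle : Cc ≤ m ^ (2 / p) := hX2 n
    have hAle : A ≤ K * (n:ℝ) ^ (p / 2) * m := ih
    have hArp : A ^ ((p - 2) / p) ≤ (K * (n:ℝ) ^ (p / 2) * m) ^ ((p - 2) / p) :=
      Real.rpow_le_rpow hA0 hAle (div_nonneg (by linarith) (by linarith))
    have hnc0 : (0:ℝ) ≤ (n:ℝ) := Nat.cast_nonneg n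
    have hexp : (K * (n:ℝ) ^ (p / 2) * m) ^ ((p - 2) / p)
        = K ^ ((p - 2) / p) * (n:ℝ) ^ ((p - 2) / 2) * m ^ ((p - 2) / p) := by
      rw [Real.mul_rpow (mul_nonneg hK0 (Real.rpow_nonneg hnc0 _)) hm0,
        Real.mul_rpow hK0 (Real.rpow_nonneg hnc0 _),
        ← Real.rpow_mul hnc0, show p / 2 * ((p - 2) / p) = (p - 2) / 2 from by field_simp]
    have hmm : m ^ ((p - 2) / p) * m ^ (2 / p) = m := by
      have he1 : (p - 2) / p + 2 / p = 1 := by field_simp; ring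
      rw [← Real.rpow_add' hm0 (by rw [he1]; norm_num), he1, Real.rpow_one]
    have hBC : B * Cc ≤ K ^ ((p - 2) / p) * (n:ℝ) ^ ((p - 2) / 2) * m := by
      calc B * Cc ≤ A ^ ((p - 2) / p) * m ^ (2 / p) :=
            mul_le_mul hBle hCle hC0 (Real.rpow_nonneg hA0 _)
        _ ≤ (K ^ ((p - 2) / p) * (n:ℝ) ^ ((p - 2) / 2) * m ^ ((p - 2) / p)) * m ^ (2 / p) := by
            refine mul_le_mul_of_nonneg_right ?_ (Real.rpow_nonneg hm0 _)
            rw [← hexp]; exact hArp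
        _ = K ^ ((p - 2) / p) * (n:ℝ) ^ ((p - 2) / 2) * m := by
            rw [mul_assoc, hmm]
    have hnum := numeric hp hD1 hK (x := (n:ℝ)) (by
      rcases Nat.eq_zero_or_pos n with h | h
      · left; simp [h]
      · right; exact_mod_cast h)
    have hnum' := mul_le_mul_of_nonneg_right hnum hm0
    have hMn : ∫ ω, |X n ω| ^ p ∂μ = m := hMi n
    have hDBC : D * (B * Cc + m) ≤ D * (K ^ ((p - 2) / p) * (n:ℝ) ^ ((p - 2) / 2) * m + m) :=
      mul_le_mul_of_nonneg_left (by linarith) hD0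
    have hgoal : ∫ ω, |∑ i ∈ Finset.range (n + 1), X i ω| ^ p ∂μ
        = ∫ ω, |(∑ i ∈ Finset.range n, X i ω) + X n ω| ^ p ∂μ := by
      simp_rw [Finset.sum_range_succ]
    rw [hgoal]
    push_cast
    calc ∫ ω, |(∑ i ∈ Finset.range n, X i ω) + X n ω| ^ p ∂μ
        ≤ A + D * (B * Cc + m) := by rw [hMn] at key; exact key
      _ ≤ K * (n:ℝ) ^ (p / 2) * m
          + D * (K ^ ((p - 2) / p) * (n:ℝ) ^ ((p - 2) / 2) * m + m) := by linarith
      _ ≤ K * ((n:ℝ) + 1) ^ (p / 2) * m := by nlinarith [hnum']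

/-- Marcinkiewicz–Zygmund-type bound: if `X` has mean zero and
`E[|X|^p] < ∞` for some `p > 2`, then there is a constant `C_p` depending
only on `p` such that for the average `X̄_N` of `N` iid copies of `X`,
`E[|X̄_N|^p] ≤ C_p · E[|X|^p] / N^{p/2}` for every `N ≥ 1`. -/
theorem stmt_0 (p : ℝ) (hp : 2 < p) :
    ∃ C : ℝ, 0 < C ∧
      ∀ (Ω : Type) (_ : MeasurableSpace Ω) (μ : Measure Ω), IsProbabilityMeasure μ →
        ∀ X : ℕ → Ω → ℝ, (∀ i, Measurable (X i)) →
          iIndepFun X μ →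
          (∀ i, IdentDistrib (X i) (X 0) μ μ) →
          (∫ ω, X 0 ω ∂μ = 0) →
          Integrable (fun ω => |X 0 ω| ^ p) μ →
          ∀ N : ℕ, 1 ≤ N →
            ∫ ω, |(N : ℝ)⁻¹ * ∑ i ∈ Finset.range N, X i ω| ^ p ∂μ
              ≤ C * (∫ ω, |X 0 ω| ^ p ∂μ) / (N : ℝ) ^ (p / 2) := by
  have hp0 : (0:ℝ) < p := by linarith
  set D : ℝ := (2:ℝ) ^ p + p + p * (p - 1) * 2 ^ p with hD
  set K : ℝ := D + (4 * D / p) ^ (p / 2) + 4 * D / p with hK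
  have h2p : (1:ℝ) ≤ 2 ^ p := Real.one_le_rpow (by norm_num) (by linarith)
  have hq : (0:ℝ) ≤ p * (p - 1) * 2 ^ p :=
    mul_nonneg (mul_nonneg (by linarith) (by linarith)) (Real.rpow_nonneg (by norm_num) p)
  have hD1 : (1:ℝ) ≤ D := by rw [hD]; linarith
  have hK0 : (0:ℝ) < K := by
    rw [hK]
    have h1 : (0:ℝ) ≤ (4 * D / p) ^ (p / 2) := Real.rpow_nonneg (by positivity) _
    have h2 : (0:ℝ) ≤ 4 * D / p := by positivity
    linarith
  refine ⟨K, hK0, ?_⟩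
  intro Ω mΩ μ hprob X hXm hindep hid hmean hint N hN
  have hNpos : (0:ℝ) < (N:ℝ) := by exact_mod_cast Nat.lt_of_lt_of_le Nat.zero_lt_one hN
  set m : ℝ := ∫ ω, |X 0 ω| ^ p ∂μ with hm
  have hm0 : 0 ≤ m := integral_nonneg fun ω => Real.rpow_nonneg (abs_nonneg _) p
  have hmain := main_bound hp hD hK μ X hXm hindep hid hmean hint N
  have hNp : (0:ℝ) < (N:ℝ) ^ p := Real.rpow_pos_of_pos hNpos p
  have hNp2 : (0:ℝ) < (N:ℝ) ^ (p / 2) := Real.rpow_pos_of_pos hNpos (p / 2)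
  have hLHS : ∫ ω, |(N : ℝ)⁻¹ * ∑ i ∈ Finset.range N, X i ω| ^ p ∂μ
      = ((N:ℝ) ^ p)⁻¹ * ∫ ω, |∑ i ∈ Finset.range N, X i ω| ^ p ∂μ := by
    have hpt : ∀ ω, |(N : ℝ)⁻¹ * ∑ i ∈ Finset.range N, X i ω| ^ p
        = ((N:ℝ) ^ p)⁻¹ * |∑ i ∈ Finset.range N, X i ω| ^ p := by
      intro ω
      rw [abs_mul, abs_of_pos (inv_pos.mpr hNpos),
        Real.mul_rpow (inv_nonneg.mpr hNpos.le) (abs_nonneg _),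
        Real.inv_rpow hNpos.le]
    simp_rw [hpt]
    exact integral_const_mul _ _
  rw [hLHS]
  have hsplit : (N:ℝ) ^ p = (N:ℝ) ^ (p / 2) * (N:ℝ) ^ (p / 2) := by
    rw [← Real.rpow_add hNpos]; ring_nf
  calc ((N:ℝ) ^ p)⁻¹ * ∫ ω, |∑ i ∈ Finset.range N, X i ω| ^ p ∂μ
      ≤ ((N:ℝ) ^ p)⁻¹ * (K * (N:ℝ) ^ (p / 2) * m) :=
        mul_le_mul_of_nonneg_left hmain (inv_nonneg.mpr hNp.le)
    _ = K * m / (N:ℝ) ^ (p / 2) := by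
        rw [hsplit]
        field_simp
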